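/- Let φ: k[X,Y] → k[X,Y] be a k-algebra homomorphism with φ(X) = F, φ(Y) = G, and suppose det Jac(F,G) ∈ k*. Let (𝒰(t), 𝒱(t)) be the unique power series solution of F(𝒰,𝒱) = tX+(1-t)F, G(𝒰,𝒱) = tY+(1-t)G with 𝒰(0)=X, 𝒱(0)=Y. If 𝒰 and 𝒱 are polynomials in t and the k-algebra map τ defined by τ(X) = 𝒰(1), τ(Y) = 𝒱(1) satisfies φ∘τ = τ∘φ = id, then φ is an automorphism with inverse τ; conversely, if φ is an automorphism then φ∘τ = τ∘φ = id. -/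

import Mathlib

open MvPolynomial

section Stmt18Aux

variable {k : Type*} [Field k] [CharZero k]

/-- constant coefficient of a power series as a `k`-algebra hom -/
noncomputable def stmt18csAH (S : Type*) [CommRing S] [Algebra k S] :
    PowerSeries S →ₐ[k] S :=
  { (PowerSeries.constantCoeff : PowerSeries S →+* S) with
    commutes' := fun r => by simp [PowerSeries.algebraMap_apply] }

/-- evaluation of a polynomial at `1` as a `k`-algebra hom -/
noncomputable def stmt18evalOneAH (S : Type*) [CommRing S] [Algebra k S] :
    Polynomial S →ₐ[k] S :=
  { Polynomial.evalRingHom (1:S) with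
    commutes' := fun r => by simp [Polynomial.algebraMap_apply] }

/-- coercion from polynomials to power series as a `k`-algebra hom -/
noncomputable def stmt18coeAH (S : Type*) [CommRing S] [Algebra k S] :
    Polynomial S →ₐ[k] PowerSeries S :=
  { Polynomial.coeToPowerSeries.ringHom with
    commutes' := fun r => by
      simp [Polynomial.algebraMap_apply, PowerSeries.algebraMap_apply] }

set_option linter.unusedSectionVars false in
/-- first order Taylor expansion of a bivariate polynomial -/
lemma stmt18taylor2 {S : Type*} [CommRing S] [Algebra k S] (f g : Fin 2 → S) (e : S)
    (P : MvPolynomial (Fin 2) k) :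
    ∃ r : S, aeval (fun i => f i + e * g i) P =
      aeval f P + e * (aeval f (pderiv 0 P) * g 0 + aeval f (pderiv 1 P) * g 1) + e^2 * r := by
  induction P using MvPolynomial.induction_on with
  | C r => exact ⟨0, by simp⟩
  | add p q hp hq =>
    obtain ⟨rp, hrp⟩ := hp; obtain ⟨rq, hrq⟩ := hq
    exact ⟨rp + rq, by simp only [map_add, hrp, hrq]; ring⟩
  | mul_X p i hp =>
    obtain ⟨r, hr⟩ := hp
    fin_cases i
    · refine ⟨r * f 0 + (aeval f (pderiv 0 p) * g 0 + aeval f (pderiv 1 p) * g 1) * g 0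
        + e * (r * g 0), ?_⟩
      simp only [map_mul, aeval_X, hr, pderiv_mul, map_add, pderiv_X_self, mul_one,
        pderiv_X_of_ne (show (0:Fin 2) ≠ 1 by decide), mul_zero, add_zero, map_one,
        Fin.mk_zero, Fin.mk_one]
      ring
    · refine ⟨r * f 1 + (aeval f (pderiv 0 p) * g 0 + aeval f (pderiv 1 p) * g 1) * g 1
        + e * (r * g 1), ?_⟩
      simp only [map_mul, aeval_X, hr, pderiv_mul, map_add, pderiv_X_self, mul_one,
        pderiv_X_of_ne (show (1:Fin 2) ≠ 0 by decide), mul_zero, add_zero, map_one,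
        Fin.mk_zero, Fin.mk_one]
      ring

/-- constant coefficient of `aeval` is `aeval` of constant coefficients -/
lemma stmt18constCoeff_aeval (f : Fin 2 → PowerSeries (MvPolynomial (Fin 2) k))
    (h0 : PowerSeries.constantCoeff (f 0) = X 0)
    (h1 : PowerSeries.constantCoeff (f 1) = X 1)
    (P : MvPolynomial (Fin 2) k) :
    PowerSeries.constantCoeff (R := MvPolynomial (Fin 2) k) (aeval f P) = P := by
  have h := comp_aeval_apply (f := f) (stmt18csAH (k := k) (MvPolynomial (Fin 2) k)) P
  have hfun : (fun i => stmt18csAH (k := k) (MvPolynomial (Fin 2) k) (f i)) = X := by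
    funext i; fin_cases i
    · exact h0
    · exact h1
  rw [hfun, aeval_X_left_apply] at h
  exact h

local notation "R2" => MvPolynomial (Fin 2) k

/-- uniqueness of power series solutions of the deformed system -/
lemma stmt18uniq (F G : MvPolynomial (Fin 2) k)
    (hJ : ∃ c : k, c ≠ 0 ∧
      Matrix.det !![pderiv 0 F, pderiv 1 F; pderiv 0 G, pderiv 1 G] = C c)
    (U V U' V' : PowerSeries (MvPolynomial (Fin 2) k))
    (hU0 : PowerSeries.constantCoeff U = X 0) (hV0 : PowerSeries.constantCoeff V = X 1)
    (hU0' : PowerSeries.constantCoeff U' = X 0) (hV0' : PowerSeries.constantCoeff V' = X 1)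
    (hF : aeval ![U, V] F = aeval ![U', V'] F)
    (hG : aeval ![U, V] G = aeval ![U', V'] G) :
    U = U' ∧ V = V' := by
  obtain ⟨c, hc, hdet⟩ := hJ
  rw [Matrix.det_fin_two_of] at hdet
  have key : ∀ n, (∀ m < n, PowerSeries.coeff (R := R2) m U = PowerSeries.coeff (R := R2) m U' ∧
      PowerSeries.coeff (R := R2) m V = PowerSeries.coeff (R := R2) m V') →
      PowerSeries.coeff (R := R2) n U = PowerSeries.coeff (R := R2) n U' ∧
      PowerSeries.coeff (R := R2) n V = PowerSeries.coeff (R := R2) n V' := by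
    intro n ih
    match n with
    | 0 =>
      simp only [PowerSeries.coeff_zero_eq_constantCoeff]
      rw [hU0, hV0, hU0', hV0']; exact ⟨rfl, rfl⟩
    | Nat.succ n =>
      have hdvdU : (PowerSeries.X : PowerSeries R2) ^ (n+1) ∣ U - U' := by
        rw [PowerSeries.X_pow_dvd_iff]
        intro m hm
        rw [map_sub, (ih m hm).1, sub_self]
      have hdvdV : (PowerSeries.X : PowerSeries R2) ^ (n+1) ∣ V - V' := by
        rw [PowerSeries.X_pow_dvd_iff]
        intro m hm
        rw [map_sub, (ih m hm).2, sub_self]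
      obtain ⟨A, hA⟩ := hdvdU
      obtain ⟨B, hB⟩ := hdvdV
      set e : PowerSeries R2 := PowerSeries.X ^ (n+1) with he
      have hUeq : U = U' + e * A := by rw [← hA]; ring
      have hVeq : V = V' + e * B := by rw [← hB]; ring
      have hfun : (fun i => (![U', V'] : Fin 2 → PowerSeries R2) i
          + e * (![A, B] : Fin 2 → PowerSeries R2) i) = ![U, V] := by
        funext i; fin_cases i
        · simpa using hUeq.symm
        · simpa using hVeq.symm
      have hlin : ∀ P : MvPolynomial (Fin 2) k, aeval ![U, V] P = aeval ![U', V'] P →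
          pderiv 0 P * PowerSeries.constantCoeff (R := R2) A
            + pderiv 1 P * PowerSeries.constantCoeff (R := R2) B = 0 := by
        intro P hP
        obtain ⟨r, hr⟩ := stmt18taylor2 (k := k) ![U', V'] ![A, B] e P
        rw [hfun, hP] at hr
        simp only [Matrix.cons_val_zero, Matrix.cons_val_one, Matrix.head_cons] at hr
        have h2 : e * ((aeval ![U', V'] (pderiv 0 P)) * A + (aeval ![U', V'] (pderiv 1 P)) * B
            + e * r) = 0 := by linear_combination -hr
        have hXne : (PowerSeries.X : PowerSeries R2) ≠ 0 := PowerSeries.X_ne_zero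
        have hene : e ≠ 0 := pow_ne_zero _ hXne
        have h3 : (aeval ![U', V'] (pderiv 0 P)) * A + (aeval ![U', V'] (pderiv 1 P)) * B
            + e * r = 0 := by
          rcases mul_eq_zero.mp h2 with h | h
          · exact absurd h hene
          · exact h
        have h4 := congrArg (PowerSeries.constantCoeff (R := R2)) h3
        have hM : ∀ i : Fin 2, PowerSeries.constantCoeff (R := R2) ((![U', V'] : Fin 2 → _) i) = X i := by
          intro i; fin_cases i <;> simpa [hU0', hV0']
        have hcc : ∀ Q : MvPolynomial (Fin 2) k,
            PowerSeries.constantCoeff (R := R2) (aeval ![U', V'] Q) = Q := by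
          intro Q
          exact stmt18constCoeff_aeval _ (by simpa using hM 0) (by simpa using hM 1) Q
        have hce : PowerSeries.constantCoeff (R := R2) e = 0 := by
          rw [he, map_pow, PowerSeries.constantCoeff_X, zero_pow (Nat.succ_ne_zero n)]
        rw [map_add, map_add, map_mul, map_mul, map_mul, hcc, hcc, hce, zero_mul, add_zero,
          map_zero] at h4
        exact h4
      have eqF := hlin F hF
      have eqG := hlin G hG
      set a := PowerSeries.constantCoeff (R := R2) A with ha
      set b := PowerSeries.constantCoeff (R := R2) B with hb
      have hca : C c * a = 0 := by
        have : C c * a = pderiv 1 G * (pderiv 0 F * a + pderiv 1 F * b)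
            - pderiv 1 F * (pderiv 0 G * a + pderiv 1 G * b) := by rw [← hdet]; ring
        rw [this, eqF, eqG, mul_zero, mul_zero, sub_zero]
      have hcb : C c * b = 0 := by
        have : C c * b = pderiv 0 F * (pderiv 0 G * a + pderiv 1 G * b)
            - pderiv 0 G * (pderiv 0 F * a + pderiv 1 F * b) := by rw [← hdet]; ring
        rw [this, eqF, eqG, mul_zero, mul_zero, sub_zero]
      have hCc : (C c : R2) ≠ 0 := by simpa using hc
      have ha0 : a = 0 := by
        rcases mul_eq_zero.mp hca with h | h
        · exact absurd h hCc
        · exact h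
      have hb0 : b = 0 := by
        rcases mul_eq_zero.mp hcb with h | h
        · exact absurd h hCc
        · exact h
      constructor
      · have : PowerSeries.coeff (R := R2) (n+1) (U - U') = 0 := by
          rw [hA, ← zero_add (n+1), PowerSeries.coeff_X_pow_mul]
          simpa using ha0
        rw [map_sub, sub_eq_zero] at this
        exact this
      · have : PowerSeries.coeff (R := R2) (n+1) (V - V') = 0 := by
          rw [hB, ← zero_add (n+1), PowerSeries.coeff_X_pow_mul]
          simpa using hb0
        rw [map_sub, sub_eq_zero] at this
        exact this
  have all : ∀ n, PowerSeries.coeff (R := R2) n U = PowerSeries.coeff (R := R2) n U' ∧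
      PowerSeries.coeff (R := R2) n V = PowerSeries.coeff (R := R2) n V' := by
    intro n
    induction n using Nat.strong_induction_on with
    | _ n ih => exact key n ih
  exact ⟨PowerSeries.ext fun n => (all n).1, PowerSeries.ext fun n => (all n).2⟩

end Stmt18Aux

/-- Given `φ(X)=F`, `φ(Y)=G` with `det Jac(F,G) ∈ k*`, and `(𝒰,𝒱)` the unique power
series solution of the deformed system: if `𝒰, 𝒱` are polynomials in `t` and the map
`τ` with `τ(X)=𝒰(1)`, `τ(Y)=𝒱(1)` satisfies `φ∘τ = τ∘φ = id`, then `φ` is an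
automorphism with inverse `τ`; conversely, if `φ` is an automorphism then `𝒰, 𝒱` are
polynomial in `t` and any such `τ` satisfies `φ∘τ = τ∘φ = id`. -/
theorem stmt18 (k : Type*) [Field k] [CharZero k]
    (F G : MvPolynomial (Fin 2) k)
    (hJ : ∃ c : k, c ≠ 0 ∧
      Matrix.det !![pderiv 0 F, pderiv 1 F; pderiv 0 G, pderiv 1 G] = C c)
    (φ : MvPolynomial (Fin 2) k →ₐ[k] MvPolynomial (Fin 2) k)
    (hφX : φ (X 0) = F) (hφY : φ (X 1) = G)
    (U V : PowerSeries (MvPolynomial (Fin 2) k))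
    (hU0 : PowerSeries.constantCoeff U = X 0)
    (hV0 : PowerSeries.constantCoeff V = X 1)
    (hFs : aeval ![U, V] F =
      PowerSeries.X * PowerSeries.C (X 0) + (1 - PowerSeries.X) * PowerSeries.C F)
    (hGs : aeval ![U, V] G =
      PowerSeries.X * PowerSeries.C (X 1) + (1 - PowerSeries.X) * PowerSeries.C G) :
    ((∃ (p q : Polynomial (MvPolynomial (Fin 2) k))
        (τ : MvPolynomial (Fin 2) k →ₐ[k] MvPolynomial (Fin 2) k),
        U = (p : PowerSeries (MvPolynomial (Fin 2) k)) ∧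
        V = (q : PowerSeries (MvPolynomial (Fin 2) k)) ∧
        τ (X 0) = Polynomial.eval 1 p ∧ τ (X 1) = Polynomial.eval 1 q ∧
        φ.comp τ = AlgHom.id k (MvPolynomial (Fin 2) k) ∧
        τ.comp φ = AlgHom.id k (MvPolynomial (Fin 2) k)) →
      Function.Bijective φ) ∧
    (Function.Bijective φ →
      ∃ p q : Polynomial (MvPolynomial (Fin 2) k),
        U = (p : PowerSeries (MvPolynomial (Fin 2) k)) ∧
        V = (q : PowerSeries (MvPolynomial (Fin 2) k)) ∧
        ∀ τ : MvPolynomial (Fin 2) k →ₐ[k] MvPolynomial (Fin 2) k,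
          τ (X 0) = Polynomial.eval 1 p → τ (X 1) = Polynomial.eval 1 q →
          φ.comp τ = AlgHom.id k (MvPolynomial (Fin 2) k) ∧
          τ.comp φ = AlgHom.id k (MvPolynomial (Fin 2) k)) := by
  constructor
  · rintro ⟨p, q, τ, -, -, -, -, h1, h2⟩
    exact ⟨Function.LeftInverse.injective (g := τ) (fun x => AlgHom.congr_fun h2 x),
      Function.RightInverse.surjective (g := τ) (fun x => AlgHom.congr_fun h1 x)⟩
  · intro hbij
    let eqv : (MvPolynomial (Fin 2) k) ≃ₐ[k] MvPolynomial (Fin 2) k :=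
      AlgEquiv.ofBijective φ hbij
    let ψ : (MvPolynomial (Fin 2) k) →ₐ[k] MvPolynomial (Fin 2) k := eqv.symm.toAlgHom
    have hψφ : ∀ x, ψ (φ x) = x := fun x => eqv.symm_apply_apply x
    have hφψ : ∀ x, φ (ψ x) = x := fun x => eqv.apply_symm_apply x
    set P := ψ (X 0) with hP
    set Q := ψ (X 1) with hQ
    have hφa : ∀ p : (MvPolynomial (Fin 2) k), φ p = aeval ![F, G] p := by
      intro p
      have h := aeval_unique φ
      have : (φ ∘ X : Fin 2 → (MvPolynomial (Fin 2) k)) = ![F, G] := by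
        funext i; fin_cases i <;> simp [hφX, hφY]
      rw [this] at h
      exact congrFun (congrArg DFunLike.coe h) p
    have hψa : ∀ p : (MvPolynomial (Fin 2) k), ψ p = aeval ![P, Q] p := by
      intro p
      have h := aeval_unique ψ
      have : (ψ ∘ X : Fin 2 → (MvPolynomial (Fin 2) k)) = ![P, Q] := by
        funext i; fin_cases i <;> simp [hP, hQ]
      rw [this] at h
      exact congrFun (congrArg DFunLike.coe h) p
    set aS : PowerSeries (MvPolynomial (Fin 2) k) :=
      PowerSeries.X * PowerSeries.C (R := MvPolynomial (Fin 2) k) (X 0) + (1 - PowerSeries.X) * PowerSeries.C (R := MvPolynomial (Fin 2) k) F with haS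
    set bS : PowerSeries (MvPolynomial (Fin 2) k) :=
      PowerSeries.X * PowerSeries.C (R := MvPolynomial (Fin 2) k) (X 1) + (1 - PowerSeries.X) * PowerSeries.C (R := MvPolynomial (Fin 2) k) G with hbS
    set U' : PowerSeries (MvPolynomial (Fin 2) k) := aeval ![aS, bS] P with hU'
    set V' : PowerSeries (MvPolynomial (Fin 2) k) := aeval ![aS, bS] Q with hV'
    have hcaS : PowerSeries.constantCoeff (R := MvPolynomial (Fin 2) k) aS = F := by simp [haS]
    have hcbS : PowerSeries.constantCoeff (R := MvPolynomial (Fin 2) k) bS = G := by simp [hbS]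
    have hcomp : ∀ p : (MvPolynomial (Fin 2) k), PowerSeries.constantCoeff (R := MvPolynomial (Fin 2) k) (aeval ![aS, bS] p) = φ p := by
      intro p
      have h := comp_aeval_apply (f := ![aS, bS]) (stmt18csAH (k := k) (MvPolynomial (Fin 2) k)) p
      have hfun : (fun i => stmt18csAH (k := k) (MvPolynomial (Fin 2) k) ((![aS, bS] : Fin 2 → _) i)) = ![F, G] := by
        funext i; fin_cases i
        · exact hcaS
        · exact hcbS
      rw [hfun] at h
      rw [show PowerSeries.constantCoeff (R := MvPolynomial (Fin 2) k) (aeval ![aS, bS] p)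
        = stmt18csAH (k := k) (MvPolynomial (Fin 2) k) (aeval ![aS, bS] p) from rfl, h, hφa]
    have hcU' : PowerSeries.constantCoeff (R := MvPolynomial (Fin 2) k) U' = X 0 := by
      rw [hU', hcomp]
      exact hφψ (X 0)
    have hcV' : PowerSeries.constantCoeff (R := MvPolynomial (Fin 2) k) V' = X 1 := by
      rw [hV', hcomp]
      exact hφψ (X 1)
    have hsol : ∀ p : (MvPolynomial (Fin 2) k), aeval ![U', V'] p = aeval ![aS, bS] (ψ p) := by
      intro p
      have h := comp_aeval_apply (f := ![P, Q]) (aeval (R := k) ![aS, bS]) p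
      have hfun : (fun i => aeval (R := k) ![aS, bS] ((![P, Q] : Fin 2 → (MvPolynomial (Fin 2) k)) i))
          = ![U', V'] := by
        funext i; fin_cases i <;> simp [hU', hV']
      rw [hfun] at h
      rw [hψa, ← h]
    have hFs' : aeval ![U', V'] F = aS := by
      rw [hsol, ← hφX, hψφ]
      simp
    have hGs' : aeval ![U', V'] G = bS := by
      rw [hsol, ← hφY, hψφ]
      simp
    obtain ⟨hUU, hVV⟩ := stmt18uniq F G hJ U V U' V' hU0 hV0 hcU' hcV'
      (hFs.trans hFs'.symm) (hGs.trans hGs'.symm)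
    set aP : Polynomial (MvPolynomial (Fin 2) k) :=
      Polynomial.X * Polynomial.C (X 0) + (1 - Polynomial.X) * Polynomial.C F with haP
    set bP : Polynomial (MvPolynomial (Fin 2) k) :=
      Polynomial.X * Polynomial.C (X 1) + (1 - Polynomial.X) * Polynomial.C G with hbP
    set p : Polynomial (MvPolynomial (Fin 2) k) := aeval ![aP, bP] P with hp
    set q : Polynomial (MvPolynomial (Fin 2) k) := aeval ![aP, bP] Q with hq
    have hcX : stmt18coeAH (k := k) (MvPolynomial (Fin 2) k) Polynomial.X = PowerSeries.X := Polynomial.coe_X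
    have hcC : ∀ x : (MvPolynomial (Fin 2) k), stmt18coeAH (k := k) (MvPolynomial (Fin 2) k) (Polynomial.C x) = PowerSeries.C (R := MvPolynomial (Fin 2) k) x :=
      fun x => Polynomial.coe_C x
    have hcoea : (stmt18coeAH (k := k) (MvPolynomial (Fin 2) k)) aP = aS := by
      simp only [haP, haS, map_add, map_mul, map_sub, map_one, hcX, hcC]
    have hcoeb : (stmt18coeAH (k := k) (MvPolynomial (Fin 2) k)) bP = bS := by
      simp only [hbP, hbS, map_add, map_mul, map_sub, map_one, hcX, hcC]
    have hpc : (↑p : PowerSeries (MvPolynomial (Fin 2) k)) = U' := by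
      have h := comp_aeval_apply (f := ![aP, bP]) (stmt18coeAH (k := k) (MvPolynomial (Fin 2) k)) P
      have hfun : (fun i => stmt18coeAH (k := k) (MvPolynomial (Fin 2) k) ((![aP, bP] : Fin 2 → _) i)) = ![aS, bS] := by
        funext i; fin_cases i
        · simpa using hcoea
        · simpa using hcoeb
      rw [hfun] at h
      exact h
    have hqc : (↑q : PowerSeries (MvPolynomial (Fin 2) k)) = V' := by
      have h := comp_aeval_apply (f := ![aP, bP]) (stmt18coeAH (k := k) (MvPolynomial (Fin 2) k)) Q
      have hfun : (fun i => stmt18coeAH (k := k) (MvPolynomial (Fin 2) k) ((![aP, bP] : Fin 2 → _) i)) = ![aS, bS] := by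
        funext i; fin_cases i
        · simpa using hcoea
        · simpa using hcoeb
      rw [hfun] at h
      exact h
    have hev : ∀ z : (MvPolynomial (Fin 2) k), Polynomial.eval 1 (aeval (R := k) ![aP, bP] z) = z := by
      intro z
      have h := comp_aeval_apply (f := ![aP, bP]) (stmt18evalOneAH (k := k) (MvPolynomial (Fin 2) k)) z
      have hfun : (fun i => stmt18evalOneAH (k := k) (MvPolynomial (Fin 2) k) ((![aP, bP] : Fin 2 → _) i)) = X := by
        funext i; fin_cases i
        · show Polynomial.eval 1 aP = X 0
          simp [haP]
        · show Polynomial.eval 1 bP = X 1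
          simp [hbP]
      rw [hfun] at h
      rw [show Polynomial.eval 1 (aeval (R := k) ![aP, bP] z)
        = stmt18evalOneAH (k := k) (MvPolynomial (Fin 2) k) (aeval ![aP, bP] z) from rfl, h, aeval_X_left_apply]
    have hpe : Polynomial.eval 1 p = P := hev P
    have hqe : Polynomial.eval 1 q = Q := hev Q
    refine ⟨p, q, by rw [hUU, ← hpc], by rw [hVV, ← hqc], ?_⟩
    intro τ h1 h2
    have hτ : τ = ψ := by
      apply MvPolynomial.algHom_ext
      intro i
      fin_cases i
      · simpa [hpe] using h1
      · simpa [hqe] using h2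
    constructor
    · apply AlgHom.ext
      intro x
      rw [AlgHom.comp_apply, hτ, AlgHom.id_apply]
      exact hφψ x
    · apply AlgHom.ext
      intro x
      rw [AlgHom.comp_apply, hτ, AlgHom.id_apply]
      exact hψφ x
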